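/- The number of minimal elements of the exponential structure R'^{(d,k)}_n (equivalently, the number of atoms of Q_{dn}(r,d,k) lying below the distinguished element c_n with a single nonzero block) is M(n) = [((dn)/k)!]^k / (n! · [(d/k)!]^{kn}). -/

import Mathlib

/-- An element of the Dowling lattice `Q_n(μ_r)`: an equivalence class of `μ_r`-labelled
partial partitions of `{1, ..., n}`.  It is encoded by its zero block `zero`, the
"same nonzero block" relation `rel` (an equivalence relation on the complement of `zero`),
and the relative labelling `lab i j = γ(i)⁻¹ γ(j) ∈ μ_r` for `i, j` in a common nonzero
block (normalised to `1` for unrelated pairs); this data is exactly an equivalence class of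
`G`-prepartitions `(I, π, γ)` for `G = μ_r`. -/
structure DowlingElt (n r : ℕ) where
  zero : Set (Fin n)
  rel : Fin n → Fin n → Prop
  lab : Fin n → Fin n → ℂ
  rel_compl : ∀ i j, rel i j → i ∉ zero ∧ j ∉ zero
  rel_refl : ∀ i, i ∉ zero → rel i i
  rel_symm : ∀ i j, rel i j → rel j i
  rel_trans : ∀ i j k, rel i j → rel j k → rel i k
  lab_root : ∀ i j, lab i j ^ r = 1
  lab_one : ∀ i j, ¬ rel i j → lab i j = 1
  lab_refl : ∀ i, lab i i = 1
  lab_symm : ∀ i j, rel i j → lab i j * lab j i = 1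
  lab_cocycle : ∀ i j k, rel i j → rel j k → lab i k = lab i j * lab j k

/-- The partial order of the Dowling lattice `Q_n(r)`: `x ≤ y` iff `y` is obtained from `x`
by merges, i.e. the zero block grows, and each nonzero block of `x` is either absorbed into
the zero block of `y` or contained (with compatible labels) in a nonzero block of `y`. -/
instance DowlingElt.instPreorder (n r : ℕ) : Preorder (DowlingElt n r) where
  le x y := x.zero ⊆ y.zero ∧
    ∀ i j, x.rel i j → (i ∈ y.zero ∧ j ∈ y.zero) ∨ (y.rel i j ∧ y.lab i j = x.lab i j)
  le_refl x := ⟨subset_rfl, fun i j h => Or.inr ⟨h, rfl⟩⟩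
  le_trans x y z h1 h2 := by
    refine ⟨h1.1.trans h2.1, fun i j h => ?_⟩
    rcases h1.2 i j h with hi | ⟨hr, hl⟩
    · exact Or.inl ⟨h2.1 hi.1, h2.1 hi.2⟩
    · rcases h2.2 i j hr with hi | ⟨hr', hl'⟩
      · exact Or.inl hi
      · exact Or.inr ⟨hr', hl'.trans hl⟩


/-- `d`-divisibility: every nonzero block has size divisible by `d`. -/
def DDiv {n r : ℕ} (d : ℕ) (x : DowlingElt n r) : Prop :=
  ∀ i, i ∉ x.zero → d ∣ Nat.card {j : Fin n // x.rel i j}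

/-- `k`-even colouring: identifying `μ_r` with `ℤ/r`, the colour of an element is its label
modulo `k`, detected by the `(r/k)`-th power of the label; within each nonzero block, every
colour class (measured relative to any base point `i` of the block) has the same size. -/
def EvenCol {n r : ℕ} (k : ℕ) (x : DowlingElt n r) : Prop :=
  ∀ i, i ∉ x.zero → ∀ ξ ζ : ℂ, ξ ^ k = 1 → ζ ^ k = 1 →
    Nat.card {j : Fin n // x.rel i j ∧ x.lab i j ^ (r / k) = ξ} =
      Nat.card {j : Fin n // x.rel i j ∧ x.lab i j ^ (r / k) = ζ}

/-- The distinguished element `c_n` of `Q_N(r, d, k)` (for `N = dn`): empty zero block, a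
single nonzero block `{1, ..., N}`, with labelling `γ(i) = ⌊(i-1)k/N⌋ + 1` (labels taken in
`ℤ/r`, realized in `μ_r` via the `r`-th root of unity `ω`). -/
noncomputable def cElt (N r k : ℕ) (ω : ℂ) (hω : ω ^ r = 1) (hω0 : ω ≠ 0) :
    DowlingElt N r where
  zero := ∅
  rel _ _ := True
  lab i j := ω ^ ((j.1 * k) / N + 1) * (ω ^ ((i.1 * k) / N + 1))⁻¹
  rel_compl i j _ := ⟨Set.notMem_empty i, Set.notMem_empty j⟩
  rel_refl _ _ := trivial
  rel_symm _ _ _ := trivial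
  rel_trans _ _ _ _ _ := trivial
  lab_root i j := by
    have key : ∀ a : ℕ, (ω ^ a) ^ r = 1 := fun a => by
      rw [← pow_mul, mul_comm, pow_mul, hω, one_pow]
    rw [mul_pow, inv_pow, key, key, inv_one, one_mul]
  lab_one i j h := absurd trivial h
  lab_refl i := mul_inv_cancel₀ (pow_ne_zero _ hω0)
  lab_symm i j _ := by
    field_simp
  lab_cocycle i j k' _ _ := by
    field_simp

lemma natCard_subtype_filter {N : ℕ} (P : Fin N → Prop) [DecidablePred P] :
    Nat.card {x // P x} = (Finset.univ.filter P).card := by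
  simp [Nat.card_eq_fintype_card, Fintype.card_subtype]

/-- fibre-ordering equivalence for a single bijection. -/
def fibEquiv {M n e : ℕ} (φ : Fin M ≃ Fin n × Fin e) (b : Fin n) :
    {x : Fin M // (φ x).1 = b} ≃ Fin e where
  toFun x := (φ x.1).2
  invFun t := ⟨φ.symm (b, t), by simp⟩
  left_inv x := by
    apply Subtype.ext
    rw [Equiv.symm_apply_eq]
    exact Prod.ext x.2.symm rfl
  right_inv t := by simp

lemma card_fiber_count (n e : ℕ) :
    Nat.card {g : Fin (n * e) → Fin n // ∀ b, Nat.card {x // g x = b} = e} *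
      e.factorial ^ n = (n * e).factorial := by
  classical
  set G := {g : Fin (n * e) → Fin n // ∀ b, Nat.card {x // g x = b} = e} with hG
  let T := Σ g : G, ∀ b : Fin n, ({x : Fin (n*e) // g.1 x = b} ≃ Fin e)
  have hcardfib : ∀ (φ : Fin (n*e) ≃ Fin n × Fin e) (b : Fin n),
      Nat.card {x // (φ x).1 = b} = e := by
    intro φ b
    rw [Nat.card_congr (fibEquiv φ b), Nat.card_eq_fintype_card, Fintype.card_fin]
  let F : (Fin (n*e) ≃ Fin n × Fin e) → T := fun φ =>
    ⟨⟨fun x => (φ x).1, fun b => hcardfib φ b⟩, fun b => fibEquiv φ b⟩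
  have hFbij : Function.Bijective F := by
    constructor
    · intro φ ψ h
      have key : ∀ (φ : Fin (n*e) ≃ Fin n × Fin e) (x : Fin (n*e)),
          φ x = ((F φ).1.1 x, (F φ).2 ((F φ).1.1 x) ⟨x, rfl⟩) := fun φ x => rfl
      apply Equiv.ext
      intro x
      rw [key φ x, h, ← key ψ x]
    · rintro ⟨⟨g, hg⟩, fam⟩
      have hinj : ∀ b (y : {x // g x = b}), g ((fam b).symm ((fam b) y)) = b := by
        intro b y; rw [Equiv.symm_apply_apply]; exact y.2
      have key : ∀ (b b' : Fin n) (h : b' = b) (x : Fin (n*e)) (hx : g x = b'),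
          fam b' ⟨x, hx⟩ = fam b ⟨x, hx.trans h⟩ := by
        rintro b b' rfl x hx; rfl
      refine ⟨{ toFun := fun x => (g x, fam (g x) ⟨x, rfl⟩)
                invFun := fun p => ((fam p.1).symm p.2).1
                left_inv := ?_
                right_inv := ?_ }, ?_⟩
      · intro x
        show ((fam (g x)).symm (fam (g x) ⟨x, rfl⟩)).1 = x
        rw [Equiv.symm_apply_apply]
      · rintro ⟨b, t⟩
        have h1 : g ((fam b).symm t).1 = b := ((fam b).symm t).2
        refine Prod.ext h1 ?_
        show fam (g ((fam b).symm t).1) ⟨((fam b).symm t).1, rfl⟩ = t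
        rw [key b _ h1 _ rfl]
        have h2 : (⟨((fam b).symm t).1, by exact h1⟩ : {x // g x = b}) = (fam b).symm t :=
          Subtype.ext rfl
        rw [h2, Equiv.apply_symm_apply]
      · -- F of this equiv = the given sigma element
        apply Sigma.ext
        · apply Subtype.ext; rfl
        · apply heq_of_eq
          funext b
          apply Equiv.ext
          intro x
          exact (key b (g x.1) x.2 x.1 rfl).trans (congrArg (fam b) (Subtype.ext rfl))
  have key := Nat.card_eq_of_bijective F hFbij
  have h1 : Nat.card (Fin (n*e) ≃ Fin n × Fin e) = (n*e).factorial := by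
    rw [Nat.card_eq_fintype_card, Fintype.card_equiv finProdFinEquiv.symm]
    simp
  have h2 : Nat.card T = Nat.card G * e.factorial ^ n := by
    rw [Nat.card_eq_fintype_card, Fintype.card_sigma]
    have : ∀ g : G, Fintype.card (∀ b : Fin n, ({x : Fin (n*e) // g.1 x = b} ≃ Fin e))
        = e.factorial ^ n := by
      intro g
      rw [Fintype.card_pi]
      have : ∀ b : Fin n, Fintype.card ({x : Fin (n*e) // g.1 x = b} ≃ Fin e)
          = e.factorial := by
        intro b
        have hc : Fintype.card {x : Fin (n*e) // g.1 x = b} = e := by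
          rw [← Nat.card_eq_fintype_card]; exact g.2 b
        rw [Fintype.card_equiv (Fintype.equivFinOfCardEq hc), hc]
      simp [this]
    simp [this, Nat.card_eq_fintype_card]
  rw [← h2, ← key, h1]

def embed (k m : ℕ) (c : Fin k) (t : Fin m) : Fin (k * m) :=
  ⟨c.1 * m + t.1, by
    calc c.1 * m + t.1 < (c.1 + 1) * m := by have := t.2; nlinarith
    _ ≤ k * m := Nat.mul_le_mul_right m c.2⟩

lemma embed_div {k m : ℕ} (c : Fin k) (t : Fin m) : ((embed k m c t : ℕ)) / m = c.1 := by
  have hm : 0 < m := Nat.pos_of_ne_zero (by rintro rfl; exact absurd t.2 (by simp))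
  show (c.1 * m + t.1) / m = c.1
  rw [mul_comm, Nat.mul_add_div hm, Nat.div_eq_of_lt t.2, add_zero]

lemma embed_mod {k m : ℕ} (c : Fin k) (t : Fin m) : ((embed k m c t : ℕ)) % m = t.1 := by
  show (c.1 * m + t.1) % m = t.1
  rw [mul_comm, Nat.mul_add_mod, Nat.mod_eq_of_lt t.2]

lemma card_good_colour (k n e : ℕ) :
    Nat.card {f : Fin (k * (n * e)) → Fin n //
        ∀ (b : Fin n) (c : Fin k),
          Nat.card {j : Fin (k * (n * e)) // f j = b ∧ (j : ℕ) / (n * e) = c.1} = e}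
      * e.factorial ^ (k * n) = ((n * e).factorial) ^ k := by
  classical
  set m := n * e with hme
  set GC := {g : Fin (n * e) → Fin n // ∀ b, Nat.card {x // g x = b} = e} with hGC
  set Good := {f : Fin (k * m) → Fin n //
      ∀ (b : Fin n) (c : Fin k),
        Nat.card {j : Fin (k * m) // f j = b ∧ (j : ℕ) / m = c.1} = e} with hGood
  have hmpos : ∀ _j : Fin (k * m), 0 < m := fun j => by
    rcases Nat.eq_zero_or_pos m with h | h
    · have h3 : k * m = 0 := by simp [h]
      have h2 := j.2; omega
    · exact h
  have hdivlt : ∀ j : Fin (k * m), (j : ℕ) / m < k := fun j =>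
    (Nat.div_lt_iff_lt_mul (hmpos j)).2 j.2
  have hembed : ∀ j : Fin (k * m),
      embed k m ⟨(j : ℕ)/m, hdivlt j⟩ ⟨(j : ℕ) % m, Nat.mod_lt _ (hmpos j)⟩ = j := fun j => by
    apply Fin.ext
    show (j : ℕ)/m * m + (j : ℕ) % m = j
    rw [mul_comm]; exact Nat.div_add_mod _ _
  have key : ∀ f : Fin (k * m) → Fin n, ∀ c : Fin k, ∀ b : Fin n,
      Nat.card {t : Fin m // f (embed k m c t) = b} =
      Nat.card {j : Fin (k * m) // f j = b ∧ (j : ℕ) / m = c.1} := by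
    intro f c b
    have harith : ∀ jj : Fin (k * m), (jj : ℕ)/m = c.1 → c.1 * m + (jj : ℕ) % m = (jj : ℕ) := by
      intro jj hjj
      calc c.1 * m + (jj : ℕ) % m = (jj : ℕ)/m * m + (jj : ℕ) % m := by rw [hjj]
        _ = (jj : ℕ) := by rw [mul_comm]; exact Nat.div_add_mod _ _
    apply Nat.card_congr
    refine ⟨fun t => ⟨embed k m c t.1, t.2, embed_div c t.1⟩,
            fun j => ⟨⟨(j.1 : ℕ) % m, Nat.mod_lt _ (hmpos j.1)⟩, ?_⟩,
            fun t => ?_, fun j => ?_⟩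
    · have hj : (embed k m c ⟨(j.1 : ℕ) % m, Nat.mod_lt _ (hmpos j.1)⟩) = j.1 := by
        apply Fin.ext
        exact harith j.1 j.2.2
      rw [hj]; exact j.2.1
    · apply Subtype.ext; apply Fin.ext
      show ((embed k m c t.1 : ℕ)) % m = t.1.1
      exact embed_mod c t.1
    · apply Subtype.ext; apply Fin.ext
      exact harith j.1 j.2.2
  have hbij : Nat.card Good = Nat.card GC ^ k := by
    let F2 : Good → (Fin k → GC) := fun f c =>
      ⟨fun t => f.1 (embed k m c t), fun b => by rw [key f.1 c b]; exact f.2 b c⟩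
    have hF2 : Function.Bijective F2 := by
      constructor
      · intro f f' h
        apply Subtype.ext; funext j
        have := congrFun (congrArg Subtype.val
          (congrFun h ⟨(j : ℕ)/m, hdivlt j⟩)) ⟨(j : ℕ) % m, Nat.mod_lt _ (hmpos j)⟩
        simpa [F2, hembed j] using this
      · intro G
        have hval : ∀ (c : Fin k) (t : Fin m),
            (G ⟨((embed k m c t : ℕ))/m, hdivlt _⟩).1
              ⟨((embed k m c t : ℕ)) % m, Nat.mod_lt _ (hmpos (embed k m c t))⟩ = (G c).1 t := by
          intro c t
          have h1 : (⟨((embed k m c t : ℕ))/m, hdivlt _⟩ : Fin k) = c :=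
            Fin.ext (embed_div c t)
          have h2 : (⟨((embed k m c t : ℕ)) % m, Nat.mod_lt _ (hmpos (embed k m c t))⟩ : Fin m) = t :=
            Fin.ext (embed_mod c t)
          rw [h1, h2]
        refine ⟨⟨fun j => (G ⟨(j : ℕ)/m, hdivlt j⟩).1 ⟨(j : ℕ) % m, Nat.mod_lt _ (hmpos j)⟩,
            ?_⟩, ?_⟩
        · intro b c
          rw [← key _ c b]
          rw [Nat.card_congr (Equiv.subtypeEquivRight (fun t => by rw [hval c t]))]
          exact (G c).2 b
        · funext c
          apply Subtype.ext; funext t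
          exact hval c t
    exact (Nat.card_eq_of_bijective F2 hF2).trans (by rw [Nat.card_pi]; simp)
  calc Nat.card Good * e.factorial ^ (k * n)
      = (Nat.card GC) ^ k * (e.factorial ^ n) ^ k := by
        rw [hbij, ← pow_mul, mul_comm k n, pow_mul]
    _ = (Nat.card GC * e.factorial ^ n) ^ k := by rw [mul_pow]
    _ = ((n * e).factorial) ^ k := by rw [card_fiber_count]

noncomputable def clab (N k : ℕ) (ω : ℂ) (i j : Fin N) : ℂ :=
  ω ^ ((j.1 * k) / N + 1) * (ω ^ ((i.1 * k) / N + 1))⁻¹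

noncomputable def mkElt (N r k n : ℕ) (ω : ℂ) (hω : ω ^ r = 1) (hω0 : ω ≠ 0)
    (f : Fin N → Fin n) : DowlingElt N r where
  zero := ∅
  rel i j := f i = f j
  lab i j := if f i = f j then clab N k ω i j else 1
  rel_compl i j _ := ⟨Set.notMem_empty i, Set.notMem_empty j⟩
  rel_refl i _ := rfl
  rel_symm i j h := h.symm
  rel_trans i j l h1 h2 := h1.trans h2
  lab_root i j := by
    have key : ∀ a : ℕ, (ω ^ a) ^ r = 1 := fun a => by
      rw [← pow_mul, mul_comm, pow_mul, hω, one_pow]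
    show (if f i = f j then clab N k ω i j else 1) ^ r = 1
    by_cases h : f i = f j
    · rw [if_pos h]; unfold clab; rw [mul_pow, inv_pow, key, key, inv_one, mul_one]
    · rw [if_neg h, one_pow]
  lab_one i j h := if_neg h
  lab_refl i := by
    show (if f i = f i then clab N k ω i i else 1) = 1
    rw [if_pos rfl]; exact mul_inv_cancel₀ (pow_ne_zero _ hω0)
  lab_symm i j h := by
    show (if f i = f j then clab N k ω i j else 1) * (if f j = f i then clab N k ω j i else 1) = 1
    rw [if_pos h, if_pos h.symm]; unfold clab; field_simp
  lab_cocycle i j l h1 h2 := by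
    show (if f i = f l then clab N k ω i l else 1) =
      (if f i = f j then clab N k ω i j else 1) * (if f j = f l then clab N k ω j l else 1)
    rw [if_pos h1, if_pos h2, if_pos (h1.trans h2)]; unfold clab; field_simp

lemma DowlingElt.ext' {N r : ℕ} {x y : DowlingElt N r} (h1 : x.zero = y.zero)
    (h2 : x.rel = y.rel) (h3 : x.lab = y.lab) : x = y := by
  cases x; cases y
  simp only at h1 h2 h3
  subst h1; subst h2; subst h3
  rfl

lemma cElt_lab (N r k : ℕ) (ω : ℂ) (hω : ω ^ r = 1) (hω0 : ω ≠ 0) (i j : Fin N) :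
    (cElt N r k ω hω hω0).lab i j = clab N k ω i j := rfl

lemma colv_eq {N k m : ℕ} (hN : N = k * m) (hk : 0 < k) (j : Fin N) :
    (j.1 * k) / N = j.1 / m := by
  obtain ⟨v, hv⟩ := j
  show v * k / N = v / m
  rw [hN, mul_comm k m, Nat.mul_div_mul_right _ _ hk]

lemma colv_lt {N k m : ℕ} (hN : N = k * m) (hm : 0 < m) (j : Fin N) :
    j.1 / m < k :=
  (Nat.div_lt_iff_lt_mul hm).2 (by have := j.2; omega)

lemma lab_cond_iff {r k m N : ℕ} (hN : N = k * m) (hk : 0 < k) (hm : 0 < m)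
    (hkr : k ∣ r) (hr : 0 < r)
    {ω : ℂ} (hprim : IsPrimitiveRoot ω r) (hω0 : ω ≠ 0)
    (i j : Fin N) (c : ℕ) (hc : c < k) :
    (clab N k ω i j) ^ (r / k) = (ω ^ (r / k)) ^ c ↔
      j.1 / m = (c + i.1 / m) % k := by
  set η := ω ^ (r / k) with hηdef
  have hη : IsPrimitiveRoot η k := hprim.pow hr (Nat.div_mul_cancel hkr).symm
  have hηk : η ^ k = 1 := hη.pow_eq_one
  have hη0 : η ≠ 0 := pow_ne_zero _ hω0
  have hpowmod : ∀ a : ℕ, η ^ a = η ^ (a % k) := fun a => by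
    conv_lhs => rw [← Nat.div_add_mod a k]
    rw [pow_add, pow_mul, hηk, one_pow, one_mul]
  have hpow : ∀ a : ℕ, (ω ^ a) ^ (r / k) = η ^ a := fun a => by
    rw [← pow_mul, mul_comm, pow_mul]
  set ci := i.1 / m with hci'
  set cj := j.1 / m with hcj'
  have hci : ci < k := colv_lt hN hm i
  have hcj : cj < k := colv_lt hN hm j
  have hclab : (clab N k ω i j) ^ (r / k) = η ^ (cj + 1) * (η ^ (ci + 1))⁻¹ := by
    unfold clab
    rw [mul_pow, inv_pow, hpow, hpow, colv_eq hN hk i, colv_eq hN hk j]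
  rw [hclab]
  rw [← div_eq_mul_inv, div_eq_iff (pow_ne_zero _ hη0), ← pow_add]
  constructor
  · intro h
    have h2 : η ^ ((cj + 1) % k) = η ^ ((c + (ci + 1)) % k) := by
      rw [← hpowmod, ← hpowmod]; exact h
    have h3 := hη.pow_inj (Nat.mod_lt _ hk) (Nat.mod_lt _ hk) h2
    have h4 : cj ≡ c + ci [MOD k] := by
      have : cj + 1 ≡ c + ci + 1 [MOD k] := by
        show (cj + 1) % k = (c + ci + 1) % k
        rw [h3]; ring_nf
      exact Nat.ModEq.add_right_cancel' 1 this
    rw [Nat.ModEq, Nat.mod_eq_of_lt hcj] at h4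
    exact h4
  · intro h
    have h4 : (cj + 1) % k = (c + (ci + 1)) % k := by
      have h5 : cj % k = (c + ci) % k := by rw [Nat.mod_eq_of_lt hcj]; exact h
      have h6 : cj + 1 ≡ c + ci + 1 [MOD k] := Nat.ModEq.add_right 1 h5
      show (cj + 1) % k = _
      rw [h6]; ring_nf
    rw [hpowmod, h4, ← hpowmod]

lemma count_transfer {N r k m : ℕ} (hN : N = k * m) (hk : 0 < k) (hm : 0 < m)
    (hkr : k ∣ r) (hr : 0 < r)
    {ω : ℂ} (hprim : IsPrimitiveRoot ω r) (hω0 : ω ≠ 0) (x : DowlingElt N r)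
    (hlab : ∀ i j, x.rel i j → x.lab i j = clab N k ω i j) (i : Fin N) (c : ℕ) (hc : c < k) :
    Nat.card {j // x.rel i j ∧ x.lab i j ^ (r / k) = (ω ^ (r / k)) ^ c} =
    Nat.card {j // x.rel i j ∧ (j.1 : ℕ) / m = (c + i.1 / m) % k} :=
  Nat.card_congr (Equiv.subtypeEquivRight fun j =>
    and_congr_right fun h => by
      rw [hlab i j h]; exact lab_cond_iff hN hk hm hkr hr hprim hω0 i j c hc)

lemma evenCol_iff {N r k m : ℕ} (hN : N = k * m) (hk : 0 < k) (hm : 0 < m)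
    (hkr : k ∣ r) (hr : 0 < r)
    {ω : ℂ} (hprim : IsPrimitiveRoot ω r) (hω0 : ω ≠ 0) (x : DowlingElt N r)
    (hzero : x.zero = ∅)
    (hlab : ∀ i j, x.rel i j → x.lab i j = clab N k ω i j) :
    EvenCol k x ↔ ∀ (i : Fin N) (c1 c2 : ℕ), c1 < k → c2 < k →
      Nat.card {j // x.rel i j ∧ (j.1 : ℕ) / m = c1} =
      Nat.card {j // x.rel i j ∧ (j.1 : ℕ) / m = c2} := by
  haveI : NeZero k := ⟨hk.ne'⟩
  set η := ω ^ (r / k) with hηdef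
  have hη : IsPrimitiveRoot η k := hprim.pow hr (Nat.div_mul_cancel hkr).symm
  have hηk : η ^ k = 1 := hη.pow_eq_one
  have hξk : ∀ c : ℕ, (η ^ c) ^ k = 1 := fun c => by
    rw [← pow_mul, mul_comm, pow_mul, hηk, one_pow]
  have hmod : ∀ (i : Fin N) (c1 : ℕ), c1 < k →
      ((c1 + (k - i.1 / m)) % k + i.1 / m) % k = c1 := by
    intro i c1 hc1
    have hci : i.1 / m < k := colv_lt hN hm i
    have h1 : (c1 + (k - i.1 / m)) % k + i.1 / m ≡ c1 + (k - i.1 / m) + i.1 / m [MOD k] :=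
      Nat.ModEq.add_right _ (Nat.mod_modEq _ _)
    have h2 : c1 + (k - i.1 / m) + i.1 / m = c1 + k := by omega
    rw [Nat.ModEq] at h1
    rw [h1, h2, Nat.add_mod_right, Nat.mod_eq_of_lt hc1]
  constructor
  · intro h i c1 c2 hc1 hc2
    have e1 := count_transfer hN hk hm hkr hr hprim hω0 x hlab i
      ((c1 + (k - i.1 / m)) % k) (Nat.mod_lt _ hk)
    have e2 := count_transfer hN hk hm hkr hr hprim hω0 x hlab i
      ((c2 + (k - i.1 / m)) % k) (Nat.mod_lt _ hk)
    have key := h i (by rw [hzero]; exact Set.notMem_empty i)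
      (η ^ ((c1 + (k - i.1 / m)) % k)) (η ^ ((c2 + (k - i.1 / m)) % k)) (hξk _) (hξk _)
    rw [e1, e2, hmod i c1 hc1, hmod i c2 hc2] at key
    exact key
  · intro h i hi ξ ζ hξ hζ
    obtain ⟨c1, hc1, rfl⟩ := hη.eq_pow_of_pow_eq_one hξ
    obtain ⟨c2, hc2, rfl⟩ := hη.eq_pow_of_pow_eq_one hζ
    rw [count_transfer hN hk hm hkr hr hprim hω0 x hlab i c1 hc1,
        count_transfer hN hk hm hkr hr hprim hω0 x hlab i c2 hc2]
    exact h i _ _ (Nat.mod_lt _ hk) (Nat.mod_lt _ hk)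

lemma block_decomp {N r k m : ℕ} (hN : N = k * m) (hm : 0 < m)
    (x : DowlingElt N r) (i : Fin N) :
    Nat.card {j // x.rel i j} =
      ∑ c : Fin k, Nat.card {j : Fin N // x.rel i j ∧ (j.1 : ℕ) / m = c.1} := by
  classical
  have E : {j // x.rel i j} ≃ Σ c : Fin k, {j : Fin N // x.rel i j ∧ (j.1 : ℕ) / m = c.1} := by
    refine ⟨fun j => ⟨⟨j.1.1 / m, colv_lt hN hm j.1⟩, j.1, j.2, rfl⟩,
            fun s => ⟨s.2.1, s.2.2.1⟩, fun j => rfl, ?_⟩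
    rintro ⟨⟨cv, hcv⟩, j, hj, hc⟩
    simp only at hc ⊢
    subst hc
    rfl
  rw [Nat.card_congr E, Nat.card_eq_fintype_card, Fintype.card_sigma]
  simp [Nat.card_eq_fintype_card]

lemma rank_strictmono {α : Type*} [DecidableEq α] [LinearOrder α] (T : Finset α) :
    ∀ a b, a ∈ T → a < b → (T.filter (· < a)).card < (T.filter (· < b)).card := by
  intro a b ha hab
  apply Finset.card_lt_card
  refine ⟨fun x hx => ?_, fun hsub => ?_⟩
  · simp only [Finset.mem_filter] at hx ⊢
    exact ⟨hx.1, hx.2.trans hab⟩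
  · have hmem : a ∈ T.filter (· < b) := by
      simp only [Finset.mem_filter]; exact ⟨ha, hab⟩
    have := hsub hmem
    simp only [Finset.mem_filter] at this
    exact absurd this.2 (lt_irrefl a)

lemma rank_injOn {α : Type*} [DecidableEq α] [LinearOrder α] (T : Finset α) :
    Set.InjOn (fun a => (T.filter (· < a)).card) T := by
  intro a ha b hb hab
  rcases lt_trichotomy a b with hlt | heq | hlt
  · exact absurd hab (Nat.ne_of_lt (rank_strictmono T a b ha hlt))
  · exact heq
  · exact absurd hab.symm (Nat.ne_of_lt (rank_strictmono T b a hb hlt))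

lemma rank_image {α : Type*} [DecidableEq α] [LinearOrder α] (T : Finset α) :
    T.image (fun a => (T.filter (· < a)).card) = Finset.range T.card := by
  classical
  have hsub : T.image (fun a => (T.filter (· < a)).card) ⊆ Finset.range T.card := by
    intro v hv
    rw [Finset.mem_image] at hv
    obtain ⟨a, ha, rfl⟩ := hv
    rw [Finset.mem_range]
    exact Finset.card_lt_card (Finset.filter_ssubset.2 ⟨a, ha, lt_irrefl a⟩)
  refine Finset.eq_of_subset_of_card_le hsub ?_
  rw [Finset.card_range, Finset.card_image_of_injOn (rank_injOn T)]

lemma count_rank {α : Type*} [DecidableEq α] [LinearOrder α] (T : Finset α)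
    (P : ℕ → Prop) [DecidablePred P] :
    (T.filter (fun a => P ((T.filter (· < a)).card))).card
      = ((Finset.range T.card).filter P).card := by
  classical
  rw [← rank_image T, Finset.filter_image,
    Finset.card_image_of_injOn ((rank_injOn T).mono (by exact_mod_cast Finset.filter_subset _ T))]

lemma count_div_interval (s e t : ℕ) (he : 0 < e) (ht : t < s) :
    ((Finset.range (s * e)).filter (fun v => v / e = t)).card = e := by
  have hset : (Finset.range (s * e)).filter (fun v => v / e = t)
      = Finset.Ico (t * e) (t * e + e) := by
    ext v
    simp only [Finset.mem_filter, Finset.mem_range, Finset.mem_Ico]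
    constructor
    · rintro ⟨hv, hd⟩
      have h1 := Nat.div_add_mod v e
      have h2 : v % e < e := Nat.mod_lt _ he
      have h3 : t * e = e * (v / e) := by rw [← hd]; ring
      omega
    · rintro ⟨h1, h2⟩
      have h3 : (t + 1) * e ≤ s * e := Nat.mul_le_mul_right e ht
      have h4 : (t + 1) * e = t * e + e := by ring
      refine ⟨by omega, ?_⟩
      exact Nat.div_eq_of_lt_le h1 (by omega)
  rw [hset, Nat.card_Ico]
  omega

lemma natCard_subtype_filter' {N : ℕ} (P : Fin N → Prop) [DecidablePred P] :
    Nat.card {x // P x} = (Finset.univ.filter P).card := by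
  simp [Nat.card_eq_fintype_card, Fintype.card_subtype]

lemma mkElt_mem (d n k r e : ℕ) (he : 0 < e) (hk : 0 < k) (hr : 0 < r) (hkr : k ∣ r)
    (hd : d = k * e) (hN : d * n = k * (n * e)) (hm : 0 < n * e)
    (ω : ℂ) (hprim : IsPrimitiveRoot ω r) (hω : ω ^ r = 1) (hω0 : ω ≠ 0)
    (f : Fin (d * n) → Fin n)
    (hf : ∀ (b : Fin n) (c : Fin k),
      Nat.card {j : Fin (d * n) // f j = b ∧ (j.1 : ℕ) / (n * e) = c.1} = e) :
    DDiv d (mkElt (d * n) r k n ω hω hω0 f) ∧ EvenCol k (mkElt (d * n) r k n ω hω hω0 f) ∧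
      mkElt (d * n) r k n ω hω hω0 f ≤ cElt (d * n) r k ω hω hω0 ∧
      ∀ y : DowlingElt (d * n) r, DDiv d y → EvenCol k y →
        y ≤ mkElt (d * n) r k n ω hω hω0 f → mkElt (d * n) r k n ω hω hω0 f ≤ y := by
  classical
  set x := mkElt (d * n) r k n ω hω hω0 f with hx
  have hxzero : x.zero = ∅ := rfl
  have hxlab : ∀ i j, x.rel i j → x.lab i j = clab (d * n) k ω i j := fun i j h => if_pos h
  have hCC : ∀ (i : Fin (d * n)) (c : Fin k),
      Nat.card {j // x.rel i j ∧ (j.1 : ℕ) / (n * e) = c.1} = e := by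
    intro i c
    have := Nat.card_congr (Equiv.subtypeEquivRight
      (q := fun j : Fin (d*n) => f j = f i ∧ (j.1 : ℕ) / (n * e) = c.1)
      (fun j => and_congr_left' ⟨fun h => h.symm, fun h => h.symm⟩))
    exact this.trans (hf (f i) c)
  have hblock : ∀ i, Nat.card {j // x.rel i j} = d := by
    intro i
    rw [block_decomp hN hm x i, Finset.sum_congr rfl (fun c _ => hCC i c),
      Finset.sum_const, Finset.card_univ, Fintype.card_fin, smul_eq_mul, hd]
  have hni : ∀ i : Fin (d * n), i ∉ x.zero := fun i => by
    rw [hxzero]; exact Set.notMem_empty i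
  refine ⟨fun i _ => by rw [hblock i], ?_, ?_, ?_⟩
  · refine (evenCol_iff hN hk hm hkr hr hprim hω0 x hxzero hxlab).2 ?_
    intro i c1 c2 hc1 hc2
    rw [hCC i ⟨c1, hc1⟩, hCC i ⟨c2, hc2⟩]
  · exact ⟨Set.Subset.rfl, fun i j h => Or.inr ⟨trivial, (if_pos h).symm⟩⟩
  · intro y hyD hyE hyx
    have hyzero : y.zero = ∅ := Set.subset_empty_iff.1 hyx.1
    have hyni : ∀ i : Fin (d * n), i ∉ y.zero := fun i => by
      rw [hyzero]; exact Set.notMem_empty i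
    have hyrel_sub : ∀ a b, y.rel a b → x.rel a b := fun a b h => by
      rcases hyx.2 a b h with ⟨ha, _⟩ | ⟨h', _⟩
      · exact absurd ha (Set.notMem_empty a)
      · exact h'
    have hsets : ∀ a : Fin (d * n),
        Finset.univ.filter (y.rel a) = Finset.univ.filter (x.rel a) := by
      intro a
      apply Finset.eq_of_subset_of_card_le
      · intro b hb
        simp only [Finset.mem_filter] at hb ⊢
        exact ⟨hb.1, hyrel_sub a b hb.2⟩
      · have h1 : (Finset.univ.filter (x.rel a)).card = d := by
          have := hblock a; rwa [natCard_subtype_filter'] at this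
        have h2 : d ∣ (Finset.univ.filter (y.rel a)).card := by
          have := hyD a (hyni a); rwa [natCard_subtype_filter'] at this
        have h3 : 0 < (Finset.univ.filter (y.rel a)).card := by
          refine Finset.card_pos.2 ⟨a, ?_⟩
          simp only [Finset.mem_filter, Finset.mem_univ, true_and]
          exact y.rel_refl a (hyni a)
        rw [h1]; exact Nat.le_of_dvd h3 h2
    have hyrel_iff : ∀ a b, y.rel a b ↔ x.rel a b := by
      intro a b
      refine ⟨hyrel_sub a b, fun h => ?_⟩
      have : b ∈ Finset.univ.filter (y.rel a) := by
        rw [hsets a]; simp only [Finset.mem_filter, Finset.mem_univ, true_and]; exact h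
      simpa using this
    refine ⟨by rw [hxzero]; exact Set.empty_subset _, fun i j hij => ?_⟩
    refine Or.inr ⟨(hyrel_iff i j).2 hij, ?_⟩
    rcases hyx.2 i j ((hyrel_iff i j).2 hij) with ⟨ha, _⟩ | ⟨_, hl⟩
    · exact absurd ha (Set.notMem_empty i)
    · exact hl.symm

lemma blocks_CC_e (d n k r e : ℕ) (he : 0 < e) (hk : 0 < k) (hr : 0 < r) (hkr : k ∣ r)
    (hd : d = k * e) (hN : d * n = k * (n * e)) (hm : 0 < n * e)
    (ω : ℂ) (hprim : IsPrimitiveRoot ω r) (hω : ω ^ r = 1) (hω0 : ω ≠ 0)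
    (x : DowlingElt (d * n) r) (hzero : x.zero = ∅)
    (hlab : ∀ i j, x.rel i j → x.lab i j = clab (d * n) k ω i j)
    (hxD : DDiv d x) (hxE : EvenCol k x)
    (hxmin : ∀ y, DDiv d y → EvenCol k y → y ≤ x → x ≤ y) :
    ∀ (i : Fin (d * n)) (c : ℕ), c < k →
      Nat.card {j // x.rel i j ∧ (j.1 : ℕ) / (n * e) = c} = e := by
  classical
  intro i c hc
  have hni : ∀ a : Fin (d * n), a ∉ x.zero := fun a => by
    rw [hzero]; exact Set.notMem_empty a
  have hcollt : ∀ a : Fin (d * n), (a.1 : ℕ) / (n * e) < k := fun a => colv_lt hN hm a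
  have hconst := (evenCol_iff hN hk hm hkr hr hprim hω0 x hzero hlab).1 hxE
  have hblocksum : ∀ (a : Fin (d * n)) (c : ℕ), c < k →
      Nat.card {j // x.rel a j} = k * Nat.card {j // x.rel a j ∧ (j.1 : ℕ) / (n * e) = c} := by
    intro a c hc
    rw [block_decomp hN hm x a,
      Finset.sum_congr rfl (fun c' _ => hconst a c'.1 c c'.2 hc),
      Finset.sum_const, Finset.card_univ, Fintype.card_fin, smul_eq_mul]
  have hpos : ∀ a : Fin (d * n), 0 < Nat.card {j // x.rel a j} := fun a => by
    haveI : Nonempty {j // x.rel a j} := ⟨⟨a, x.rel_refl a (hni a)⟩⟩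
    exact Nat.card_pos
  have hCCpos : ∀ (a : Fin (d * n)) (c : ℕ), c < k →
      0 < Nat.card {j // x.rel a j ∧ (j.1 : ℕ) / (n * e) = c} := by
    intro a c hc
    have h1 := hpos a
    rw [hblocksum a c hc] at h1
    rcases Nat.eq_zero_or_pos (Nat.card {j // x.rel a j ∧ (j.1 : ℕ) / (n * e) = c}) with h0 | h0
    · rw [h0, mul_zero] at h1; omega
    · exact h0
  have hCCdvd : ∀ (a : Fin (d * n)) (c : ℕ), c < k →
      e ∣ Nat.card {j // x.rel a j ∧ (j.1 : ℕ) / (n * e) = c} := by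
    intro a c hc
    have h1 := hxD a (hni a)
    rw [hblocksum a c hc] at h1
    exact (mul_dvd_mul_iff_left hk.ne').1 (by rw [← hd]; exact h1)
  -- Finset versions
  set Tfin : Fin (d * n) → ℕ → Finset (Fin (d * n)) :=
    fun a c => Finset.univ.filter (fun j => x.rel a j ∧ (j.1 : ℕ) / (n * e) = c) with hTfin
  have hTcard : ∀ a c, (Tfin a c).card =
      Nat.card {j // x.rel a j ∧ (j.1 : ℕ) / (n * e) = c} := fun a c =>
    (natCard_subtype_filter' _).symm
  set idx : Fin (d * n) → ℕ :=
    fun j => ((Tfin j ((j.1 : ℕ) / (n * e))).filter (· < j)).card with hidx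
  set chunk : Fin (d * n) → ℕ := fun j => idx j / e with hchunk
  have hDmem : ∀ j, j ∈ Tfin j ((j.1 : ℕ) / (n * e)) := fun j => by
    simp only [hTfin, Finset.mem_filter, Finset.mem_univ, true_and]
    exact ⟨x.rel_refl j (hni j), trivial⟩
  have hTeq : ∀ (a : Fin (d * n)) (c : ℕ) (j : Fin (d * n)), j ∈ Tfin a c →
      Tfin j ((j.1 : ℕ) / (n * e)) = Tfin a c := by
    intro a c j hj
    simp only [hTfin, Finset.mem_filter, Finset.mem_univ, true_and] at hj
    ext j'
    simp only [hTfin, Finset.mem_filter, Finset.mem_univ, true_and]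
    constructor
    · rintro ⟨h1, h2⟩
      exact ⟨x.rel_trans a j j' hj.1 h1, by rw [h2, hj.2]⟩
    · rintro ⟨h1, h2⟩
      exact ⟨x.rel_trans j a j' (x.rel_symm a j hj.1) h1, by rw [h2, hj.2]⟩
  have hidxT : ∀ (a : Fin (d * n)) (c : ℕ) (j : Fin (d * n)), j ∈ Tfin a c →
      idx j = ((Tfin a c).filter (· < j)).card := by
    intro a c j hj
    show ((Tfin j ((j.1 : ℕ) / (n * e))).filter (· < j)).card = _
    rw [hTeq a c j hj]
  have hidx_lt : ∀ j, idx j < (Tfin j ((j.1 : ℕ) / (n * e))).card := fun j =>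
    Finset.card_lt_card (Finset.filter_ssubset.2 ⟨j, hDmem j, lt_irrefl j⟩)
  -- the key count for the would-be refinement
  have hyCC : ∀ (a : Fin (d * n)) (c : ℕ), c < k →
      Nat.card {j // (x.rel a j ∧ chunk a = chunk j) ∧ (j.1 : ℕ) / (n * e) = c} = e := by
    intro a c hc
    obtain ⟨s, hs⟩ := hCCdvd a c hc
    have hspos : 0 < s := by
      have h0 := hCCpos a c hc
      rw [hs] at h0
      rcases Nat.eq_zero_or_pos s with h1 | h1
      · rw [h1, mul_zero] at h0; omega
      · exact h1
    have hDcard : (Tfin a ((a.1 : ℕ) / (n * e))).card = e * s := by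
      rw [hTcard, hconst a _ c (hcollt a) hc, hs]
    have hchunka : chunk a < s := by
      have h1 := hidx_lt a
      rw [hDcard] at h1
      show idx a / e < s
      rw [Nat.div_lt_iff_lt_mul he, mul_comm s e]
      exact h1
    have hseteq : Finset.univ.filter
        (fun j => (x.rel a j ∧ chunk a = chunk j) ∧ (j.1 : ℕ) / (n * e) = c)
        = (Tfin a c).filter (fun j => ((Tfin a c).filter (· < j)).card / e = chunk a) := by
      ext j
      simp only [hTfin, Finset.mem_filter, Finset.mem_univ, true_and]
      constructor
      · rintro ⟨⟨h1, h2⟩, h3⟩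
        have hjT : j ∈ Tfin a c := by
          simp only [hTfin, Finset.mem_filter, Finset.mem_univ, true_and]
          exact ⟨h1, h3⟩
        refine ⟨⟨h1, h3⟩, ?_⟩
        rw [← hidxT a c j hjT]
        exact h2.symm
      · rintro ⟨⟨h1, h3⟩, h4⟩
        have hjT : j ∈ Tfin a c := by
          simp only [hTfin, Finset.mem_filter, Finset.mem_univ, true_and]
          exact ⟨h1, h3⟩
        refine ⟨⟨h1, ?_⟩, h3⟩
        show chunk a = idx j / e
        rw [hidxT a c j hjT, h4]
    rw [natCard_subtype_filter', hseteq, count_rank (Tfin a c) (fun v => v / e = chunk a)]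
    have hTc : (Tfin a c).card = s * e := by rw [hTcard, hs, mul_comm]
    rw [hTc, count_div_interval s e (chunk a) he hchunka]
  -- construct the refinement y
  set y : DowlingElt (d * n) r :=
    { zero := ∅
      rel := fun a b => x.rel a b ∧ chunk a = chunk b
      lab := fun a b => if chunk a = chunk b then x.lab a b else 1
      rel_compl := fun a b _ => ⟨Set.notMem_empty a, Set.notMem_empty b⟩
      rel_refl := fun a _ => ⟨x.rel_refl a (hni a), rfl⟩
      rel_symm := fun a b h => ⟨x.rel_symm a b h.1, h.2.symm⟩
      rel_trans := fun a b c h1 h2 => ⟨x.rel_trans a b c h1.1 h2.1, h1.2.trans h2.2⟩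
      lab_root := fun a b => by
        show (if chunk a = chunk b then x.lab a b else 1) ^ r = 1
        by_cases h : chunk a = chunk b
        · rw [if_pos h]; exact x.lab_root a b
        · rw [if_neg h, one_pow]
      lab_one := fun a b h => by
        show (if chunk a = chunk b then x.lab a b else 1) = 1
        by_cases h2 : chunk a = chunk b
        · rw [if_pos h2]; exact x.lab_one a b (fun hr' => h ⟨hr', h2⟩)
        · exact if_neg h2
      lab_refl := fun a => by
        show (if chunk a = chunk a then x.lab a a else 1) = 1
        rw [if_pos rfl]; exact x.lab_refl a
      lab_symm := fun a b h => by
        show (if chunk a = chunk b then x.lab a b else 1) *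
          (if chunk b = chunk a then x.lab b a else 1) = 1
        rw [if_pos h.2, if_pos h.2.symm]; exact x.lab_symm a b h.1
      lab_cocycle := fun a b c h1 h2 => by
        show (if chunk a = chunk c then x.lab a c else 1) =
          (if chunk a = chunk b then x.lab a b else 1) *
          (if chunk b = chunk c then x.lab b c else 1)
        rw [if_pos h1.2, if_pos h2.2, if_pos (h1.2.trans h2.2)]
        exact x.lab_cocycle a b c h1.1 h2.1 } with hy
  have hyzero : y.zero = ∅ := rfl
  have hylab : ∀ a b, y.rel a b → y.lab a b = clab (d * n) k ω a b := fun a b h => by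
    show (if chunk a = chunk b then x.lab a b else 1) = _
    rw [if_pos h.2]; exact hlab a b h.1
  have hyblock : ∀ a, Nat.card {j // y.rel a j} = d := by
    intro a
    rw [block_decomp hN hm y a,
      Finset.sum_congr rfl (fun c' (_ : c' ∈ Finset.univ) => hyCC a c'.1 c'.2),
      Finset.sum_const, Finset.card_univ, Fintype.card_fin, smul_eq_mul, hd]
  have hyD : DDiv d y := fun a _ => by rw [hyblock a]
  have hyE : EvenCol k y := by
    refine (evenCol_iff hN hk hm hkr hr hprim hω0 y hyzero hylab).2 ?_
    intro a c1 c2 hc1 hc2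
    exact (hyCC a c1 hc1).trans (hyCC a c2 hc2).symm
  have hylex : y ≤ x :=
    ⟨fun a ha => absurd ha (Set.notMem_empty a),
     fun a b h => Or.inr ⟨h.1, (if_pos h.2).symm⟩⟩
  have hxy := hxmin y hyD hyE hylex
  by_contra hne
  obtain ⟨s, hs⟩ := hCCdvd i c hc
  have hspos : 0 < s := by
    have h0 := hCCpos i c hc
    rw [hs] at h0
    rcases Nat.eq_zero_or_pos s with h1 | h1
    · rw [h1, mul_zero] at h0; omega
    · exact h1
  have hs2 : 2 ≤ s := by
    rcases Nat.lt_or_ge s 2 with h1 | h1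
    · have hone : s = 1 := by omega
      rw [hone, mul_one] at hs
      exact absurd hs hne
    · exact h1
  have hTcard0 : (Tfin i c).card = s * e := by rw [hTcard, hs, mul_comm]
  have h0mem : (0 : ℕ) ∈ Finset.range (Tfin i c).card := by
    rw [Finset.mem_range, hTcard0]; exact Nat.mul_pos hspos he
  have hemem : e ∈ Finset.range (Tfin i c).card := by
    rw [Finset.mem_range, hTcard0]
    calc e < 2 * e := by omega
    _ ≤ s * e := Nat.mul_le_mul_right e hs2
  rw [← rank_image (Tfin i c)] at h0mem hemem
  obtain ⟨j1, hj1T, hj1⟩ := Finset.mem_image.1 h0mem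
  obtain ⟨j2, hj2T, hj2⟩ := Finset.mem_image.1 hemem
  have hchunk1 : chunk j1 = 0 := by
    show idx j1 / e = 0
    rw [hidxT i c j1 hj1T, hj1, Nat.zero_div]
  have hchunk2 : chunk j2 = 1 := by
    show idx j2 / e = 1
    rw [hidxT i c j2 hj2T, hj2, Nat.div_self he]
  have hrel12 : x.rel j1 j2 := by
    simp only [hTfin, Finset.mem_filter, Finset.mem_univ, true_and] at hj1T hj2T
    exact x.rel_trans j1 i j2 (x.rel_symm i j1 hj1T.1) hj2T.1
  rcases hxy.2 j1 j2 hrel12 with ⟨ha, _⟩ | ⟨hrel', _⟩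
  · exact absurd ha (Set.notMem_empty j1)
  · have hcc := hrel'.2
    rw [hchunk1, hchunk2] at hcc
    exact absurd hcc (by omega)

lemma exists_good (d n k r e : ℕ) (he : 0 < e) (hk : 0 < k) (hr : 0 < r) (hkr : k ∣ r)
    (hd : d = k * e) (hN : d * n = k * (n * e)) (hm : 0 < n * e)
    (ω : ℂ) (hprim : IsPrimitiveRoot ω r) (hω : ω ^ r = 1) (hω0 : ω ≠ 0)
    (x : DowlingElt (d * n) r)
    (hxD : DDiv d x) (hxE : EvenCol k x) (hxle : x ≤ cElt (d * n) r k ω hω hω0)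
    (hxmin : ∀ y, DDiv d y → EvenCol k y → y ≤ x → x ≤ y) :
    ∃ f : Fin (d * n) → Fin n,
      (∀ (b : Fin n) (c : Fin k),
        Nat.card {j : Fin (d * n) // f j = b ∧ (j.1 : ℕ) / (n * e) = c.1} = e) ∧
      mkElt (d * n) r k n ω hω hω0 f = x := by
  classical
  have hdpos : 0 < d := by rw [hd]; exact Nat.mul_pos hk he
  have hzero : x.zero = ∅ := Set.subset_empty_iff.1 hxle.1
  have hni : ∀ a : Fin (d * n), a ∉ x.zero := fun a => by
    rw [hzero]; exact Set.notMem_empty a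
  have hlab : ∀ i j, x.rel i j → x.lab i j = clab (d * n) k ω i j := fun i j h => by
    rcases hxle.2 i j h with ⟨ha, _⟩ | ⟨_, hl⟩
    · exact absurd ha (Set.notMem_empty i)
    · exact hl.symm
  have hCCe := blocks_CC_e d n k r e he hk hr hkr hd hN hm ω hprim hω hω0 x hzero hlab hxD hxE hxmin
  have hblock : ∀ i, Nat.card {j // x.rel i j} = d := by
    intro i
    rw [block_decomp hN hm x i,
      Finset.sum_congr rfl (fun c' (_ : c' ∈ Finset.univ) => hCCe i c'.1 c'.2),
      Finset.sum_const, Finset.card_univ, Fintype.card_fin, smul_eq_mul, hd]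
  set Bfin : Fin (d * n) → Finset (Fin (d * n)) := fun a => Finset.univ.filter (x.rel a)
    with hBfin
  have hBne : ∀ a, (Bfin a).Nonempty := by
    intro a
    refine ⟨a, ?_⟩
    simp only [hBfin, Finset.mem_filter, Finset.mem_univ, true_and]
    exact x.rel_refl a (hni a)
  set lead : Fin (d * n) → Fin (d * n) := fun a => (Bfin a).min' (hBne a) with hlead
  have hlead_rel : ∀ a, x.rel a (lead a) := fun a => by
    have := Finset.min'_mem (Bfin a) (hBne a)
    simp only [hBfin, Finset.mem_filter, Finset.mem_univ, true_and] at this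
    exact this
  have hBeq : ∀ a b, x.rel a b → Bfin a = Bfin b := by
    intro a b h
    ext j
    simp only [hBfin, Finset.mem_filter, Finset.mem_univ, true_and]
    exact ⟨fun h1 => x.rel_trans b a j (x.rel_symm a b h) h1,
      fun h1 => x.rel_trans a b j h h1⟩
  have hminc : ∀ (sA sB : Finset (Fin (d * n))) (h : sA = sB) (hA : sA.Nonempty)
      (hB : sB.Nonempty), sA.min' hA = sB.min' hB := by
    rintro sA sB rfl hA hB; rfl
  have hlead_eq : ∀ a b, x.rel a b → lead a = lead b := fun a b h =>
    hminc _ _ (hBeq a b h) _ _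
  set reps : Finset (Fin (d * n)) := Finset.univ.filter (fun a => lead a = a) with hreps
  have hlead_mem : ∀ a, lead a ∈ reps := fun a => by
    simp only [hreps, Finset.mem_filter, Finset.mem_univ, true_and]
    exact (hlead_eq a (lead a) (hlead_rel a)).symm
  have hreps_fix : ∀ a, a ∈ reps → lead a = a := fun a ha => by
    simpa only [hreps, Finset.mem_filter, Finset.mem_univ, true_and] using ha
  have hrel_iff_lead : ∀ a b, x.rel a b ↔ lead a = lead b := by
    intro a b
    refine ⟨hlead_eq a b, fun h => ?_⟩
    have h1 : x.rel a (lead b) := h ▸ hlead_rel a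
    exact x.rel_trans a (lead b) b h1 (x.rel_symm b (lead b) (hlead_rel b))
  have hcard_reps : reps.card = n := by
    have E : Fin (d * n) ≃ Σ y : {i // i ∈ reps}, {j // x.rel y.1 j} := by
      refine ⟨fun j => ⟨⟨lead j, hlead_mem j⟩, ⟨j, x.rel_symm j (lead j) (hlead_rel j)⟩⟩,
        fun s => s.2.1, fun j => rfl, ?_⟩
      rintro ⟨⟨yv, hy⟩, j, hj⟩
      have h1 : lead j = yv := by
        have := hlead_eq yv j hj
        rw [hreps_fix yv hy] at this
        exact this.symm
      simp only
      subst h1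
      rfl
    have h1 := Nat.card_congr E
    rw [Nat.card_eq_fintype_card, Fintype.card_fin, Nat.card_eq_fintype_card,
      Fintype.card_sigma] at h1
    have h2 : ∀ y : {i // i ∈ reps}, Fintype.card {j // x.rel y.1 j} = d := fun y => by
      rw [← Nat.card_eq_fintype_card]; exact hblock y.1
    rw [Finset.sum_congr rfl (fun y _ => h2 y), Finset.sum_const, Finset.card_univ,
      Fintype.card_coe, smul_eq_mul] at h1
    have h3 : d * n = d * reps.card := h1.trans (mul_comm _ _)
    exact (Nat.eq_of_mul_eq_mul_left hdpos h3).symm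
  set repIso := reps.orderIsoOfFin hcard_reps with hrepIso
  set f : Fin (d * n) → Fin n := fun j => repIso.symm ⟨lead j, hlead_mem j⟩ with hf
  have hf_iff : ∀ (b : Fin n) (j : Fin (d * n)), f j = b ↔ x.rel (repIso b).1 j := by
    intro b j
    rw [hf]
    simp only
    rw [OrderIso.symm_apply_eq, Subtype.ext_iff]
    constructor
    · intro h
      have h1 : x.rel j (repIso b).1 := h ▸ hlead_rel j
      exact x.rel_symm j _ h1
    · intro h
      have h1 := hlead_eq _ j h
      rw [hreps_fix (repIso b).1 (repIso b).2] at h1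
      exact h1.symm
  refine ⟨f, fun b c => ?_, ?_⟩
  · exact (Nat.card_congr (Equiv.subtypeEquivRight fun j =>
      and_congr_left' (hf_iff b j))).trans (hCCe (repIso b).1 c.1 c.2)
  · apply DowlingElt.ext'
    · exact hzero.symm
    · funext a b
      apply propext
      show f a = f b ↔ x.rel a b
      rw [hrel_iff_lead a b]
      constructor
      · intro h
        exact Subtype.ext_iff.1 (repIso.symm.injective h)
      · intro h
        rw [hf]
        simp only
        congr 1
        exact Subtype.ext h
    · funext a b
      show (if f a = f b then clab (d * n) k ω a b else 1) = x.lab a b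
      by_cases h : f a = f b
      · rw [if_pos h]
        have hrel : x.rel a b := by
          rw [hrel_iff_lead a b]
          exact Subtype.ext_iff.1 (repIso.symm.injective h)
        exact (hlab a b hrel).symm
      · rw [if_neg h]
        have hnrel : ¬ x.rel a b := fun hrel => h (by
          rw [hf]
          simp only
          congr 1
          exact Subtype.ext (hlead_eq a b hrel))
        exact (x.lab_one a b hnrel).symm

lemma card_good_colour' (k n e N : ℕ) (hN : N = k * (n * e)) :
    Nat.card {f : Fin N → Fin n // ∀ (b : Fin n) (c : Fin k),
      Nat.card {j : Fin N // f j = b ∧ (j.1 : ℕ) / (n * e) = c.1} = e} * e.factorial ^ (k * n)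
      = ((n * e).factorial) ^ k := by
  subst hN; exact card_good_colour k n e


/-- The number of minimal elements of the exponential structure
`R'^{(d,k)}_n` — equivalently, the number of atoms of the `k`-evenly coloured `d`-divisible
Dowling lattice `Q_{dn}(r, d, k)` lying below the distinguished one-block element `c_n` —
is `M(n) = ((dn/k)!)^k / (n! ((d/k)!)^{kn})`. -/
theorem card_atoms_below_cn (d n k r : ℕ) (hd : 0 < d) (hk : 0 < k) (hr : 0 < r)
    (hkd : k ∣ d) (hkr : k ∣ r)
    (ω : ℂ) (hprim : IsPrimitiveRoot ω r) (hω : ω ^ r = 1) (hω0 : ω ≠ 0) :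
    Nat.card {x : DowlingElt (d * n) r //
        DDiv d x ∧ EvenCol k x ∧ x ≤ cElt (d * n) r k ω hω hω0 ∧
        ∀ y : DowlingElt (d * n) r, DDiv d y → EvenCol k y → y ≤ x → x ≤ y} =
      ((d * n / k).factorial) ^ k /
        (n.factorial * ((d / k).factorial) ^ (k * n)) := by
  classical
  rcases Nat.eq_zero_or_pos n with hn0 | hn
  · subst hn0
    have hempty : ∀ a : Fin (d * 0), False := fun a => by have := a.2; omega
    have hR : ((d * 0 / k).factorial) ^ k /
        (Nat.factorial 0 * ((d / k).factorial) ^ (k * 0)) = 1 := by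
      simp
    rw [hR, Nat.card_eq_one_iff_unique]
    constructor
    · constructor
      rintro ⟨x, hx⟩ ⟨y, hy⟩
      apply Subtype.ext
      apply DowlingElt.ext'
      · ext a; exact (hempty a).elim
      · funext a; exact (hempty a).elim
      · funext a; exact (hempty a).elim
    · refine ⟨⟨mkElt (d * 0) r k 0 ω hω hω0 (fun a => (hempty a).elim),
        fun i _ => (hempty i).elim, fun i _ => (hempty i).elim,
        ⟨Set.empty_subset _, fun i j _ => (hempty i).elim⟩,
        fun y _ _ _ => ⟨Set.empty_subset _, fun i j _ => (hempty i).elim⟩⟩⟩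
  · set e := d / k with he'
    have hdke : d = k * e := (Nat.mul_div_cancel' hkd).symm
    have he : 0 < e := by
      rcases Nat.eq_zero_or_pos e with h0 | h0
      · rw [h0, mul_zero] at hdke; omega
      · exact h0
    have hN : d * n = k * (n * e) := by rw [hdke]; ring
    have hm : 0 < n * e := Nat.mul_pos hn he
    have hdiveq : d * n / k = n * e := by rw [hN]; exact Nat.mul_div_cancel_left _ hk
    set S := {x : DowlingElt (d * n) r //
        DDiv d x ∧ EvenCol k x ∧ x ≤ cElt (d * n) r k ω hω hω0 ∧
        ∀ y : DowlingElt (d * n) r, DDiv d y → EvenCol k y → y ≤ x → x ≤ y} with hS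
    set Good := {f : Fin (d * n) → Fin n // ∀ (b : Fin n) (c : Fin k),
      Nat.card {j : Fin (d * n) // f j = b ∧ (j.1 : ℕ) / (n * e) = c.1} = e} with hGood
    let Φ : Good → S := fun f =>
      ⟨mkElt (d * n) r k n ω hω hω0 f.1,
        mkElt_mem d n k r e he hk hr hkr hdke hN hm ω hprim hω hω0 f.1 f.2⟩
    have hsurj : Function.Surjective Φ := by
      rintro ⟨x, hxD, hxE, hxle, hxmin⟩
      obtain ⟨f, hf, hmk⟩ := exists_good d n k r e he hk hr hkr hdke hN hm ω hprim hω hω0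
        x hxD hxE hxle hxmin
      exact ⟨⟨f, hf⟩, Subtype.ext hmk⟩
    have hgood_surj : ∀ f : Good, Function.Surjective f.1 := by
      intro f b
      have h1 := f.2 b ⟨0, hk⟩
      have h2 : Nonempty {j : Fin (d * n) // f.1 j = b ∧ (j.1 : ℕ) / (n * e) = (0 : ℕ)} := by
        by_contra hne
        rw [not_nonempty_iff] at hne
        rw [Nat.card_of_isEmpty] at h1
        omega
      obtain ⟨⟨j, hj, _⟩⟩ := h2
      exact ⟨j, hj⟩
    have hfib : ∀ z : S, Nat.card {f : Good // Φ f = z} = n.factorial := by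
      intro z
      obtain ⟨f0, hf0⟩ := hsurj z
      have hgprop : ∀ σ : Equiv.Perm (Fin n), ∀ (b : Fin n) (c : Fin k),
          Nat.card {j : Fin (d * n) // σ (f0.1 j) = b ∧ (j.1 : ℕ) / (n * e) = c.1} = e := by
        intro σ b c
        refine (Nat.card_congr (Equiv.subtypeEquivRight fun j =>
          and_congr_left' ?_)).trans (f0.2 (σ.symm b) c)
        exact ⟨fun h => by rw [← h, Equiv.symm_apply_apply], fun h => by rw [h, Equiv.apply_symm_apply]⟩
      have hΨmk : ∀ σ : Equiv.Perm (Fin n),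
          mkElt (d * n) r k n ω hω hω0 (fun j => σ (f0.1 j)) = mkElt (d * n) r k n ω hω hω0 f0.1 := by
        intro σ
        apply DowlingElt.ext'
        · rfl
        · funext a b
          exact propext σ.injective.eq_iff
        · funext a b
          show (if σ (f0.1 a) = σ (f0.1 b) then clab (d * n) k ω a b else 1)
            = (if f0.1 a = f0.1 b then clab (d * n) k ω a b else 1)
          simp only [σ.injective.eq_iff]
      let Ψ : Equiv.Perm (Fin n) → {f : Good // Φ f = z} := fun σ =>
        ⟨⟨fun j => σ (f0.1 j), hgprop σ⟩, by
          show Φ _ = z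
          rw [← hf0]
          apply Subtype.ext
          exact hΨmk σ⟩
      have hΨbij : Function.Bijective Ψ := by
        constructor
        · intro σ τ h
          have h1 : ∀ j, σ (f0.1 j) = τ (f0.1 j) := fun j =>
            congrFun (congrArg (fun q => (q.1.1 : Fin (d * n) → Fin n)) h) j
          apply Equiv.ext
          intro b
          obtain ⟨j, rfl⟩ := hgood_surj f0 b
          exact h1 j
        · rintro ⟨f, hfz⟩
          have hmkeq : mkElt (d * n) r k n ω hω hω0 f.1 = mkElt (d * n) r k n ω hω hω0 f0.1 := by
            have := hfz.trans hf0.symm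
            exact congrArg Subtype.val this
          have hker : ∀ a b, (f.1 a = f.1 b) ↔ (f0.1 a = f0.1 b) := by
            intro a b
            have h1 := congrArg DowlingElt.rel hmkeq
            exact iff_of_eq (congrFun (congrFun h1 a) b)
          set σ0 : Fin n → Fin n := fun b => f.1 (Function.surjInv (hgood_surj f0) b) with hσ0
          have hσ0f : ∀ j, σ0 (f0.1 j) = f.1 j := by
            intro j
            exact (hker _ j).2 (Function.surjInv_eq (hgood_surj f0) (f0.1 j))
          have hσ0surj : Function.Surjective σ0 := by
            intro b
            obtain ⟨j, hj⟩ := hgood_surj f b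
            exact ⟨f0.1 j, by rw [hσ0f j, hj]⟩
          have hbij := Finite.surjective_iff_bijective.1 hσ0surj
          refine ⟨Equiv.ofBijective σ0 hbij, ?_⟩
          apply Subtype.ext
          apply Subtype.ext
          funext j
          exact hσ0f j
      rw [← Nat.card_eq_of_bijective Ψ hΨbij, Nat.card_eq_fintype_card,
        Fintype.card_perm, Fintype.card_fin]
    haveI : Finite S := Finite.of_surjective Φ hsurj
    haveI : Fintype S := Fintype.ofFinite _
    haveI : Fintype Good := Fintype.ofFinite _
    have hGS : Nat.card Good = Nat.card S * n.factorial := by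
      rw [Nat.card_congr (Equiv.sigmaFiberEquiv Φ).symm, Nat.card_eq_fintype_card,
        Fintype.card_sigma]
      have hterm : ∀ z : S, Fintype.card {f : Good // Φ f = z} = n.factorial := fun z => by
        rw [← Nat.card_eq_fintype_card]; exact hfib z
      rw [Finset.sum_congr rfl (fun z (_ : z ∈ Finset.univ) => hterm z), Finset.sum_const,
        Finset.card_univ, smul_eq_mul, Nat.card_eq_fintype_card]
    have hGoodcount := card_good_colour' k n e (d * n) hN
    rw [hdiveq]
    have hpos : 0 < n.factorial * (e.factorial) ^ (k * n) := by positivity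
    refine (Nat.div_eq_of_eq_mul_left hpos ?_).symm
    rw [← hGoodcount, hGS]
    ring
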